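/- Let Q, B ⊂ S^1 be unlinked closed sets with card(B) ≥ 3 and card(Q) ≥ 3. Suppose there exists τ > 0 such that B has at least two holes of length ≥ τ and Q has at least two holes of length ≥ τ. Then Q is contained in a hole of B whose length is strictly greater than τ. -/

import Mathlib

open MeasureTheory Set Metric Filter Topology

noncomputable section

abbrev S1 := AddCircle (1 : ℝ)

def fd (d : ℕ) : S1 → S1 := fun x => d • x

def len (A : Set S1) : ℝ := (volume A).toReal

def IsHole (B H : Set S1) : Prop := ∃ x ∈ Bᶜ, H = connectedComponentIn Bᶜ x

def openArc (u w : S1) : Set S1 := {x | SBtw.sbtw u x w}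

def OrientPresOn (g : S1 → S1) (B : Set S1) : Prop :=
  Set.InjOn g B ∧ ∀ a ∈ B, ∀ b ∈ B, ∀ c ∈ B, SBtw.sbtw a b c → SBtw.sbtw (g a) (g b) (g c)

def emb (x : S1) : ℂ := (AddCircle.toCircle x : ℂ)

def chord (a b : S1) : Set ℂ := segment ℝ (emb a) (emb b)

def CH (A : Set S1) : Set ℂ := convexHull ℝ (emb '' A)

def Wandering (d N : ℕ) (T : Set S1) : Prop :=
  ∀ i j : ℕ, ((fd d)^[i] '' T).ncard = N ∧
    (i ≠ j → Disjoint (CH ((fd d)^[i] '' T)) (CH ((fd d)^[j] '' T)))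

def IsHoleEnum (B : Set S1) {N : ℕ} (H : Fin N → Set S1) : Prop :=
  Function.Injective H ∧ (∀ k, IsHole B (H k)) ∧ (∀ G, IsHole B G → ∃ k, H k = G) ∧
  ∀ k l : Fin N, k ≤ l → len (H k) ≤ len (H l)

def rem (d : ℕ) (s : ℝ) : ℝ := s - (⌊(d : ℝ) * s⌋ : ℝ) / d

def ImageHoleRel (g : S1 → S1) (H K : Set S1) : Prop :=
  ∃ u w : S1, u ≠ w ∧ H = openArc u w ∧ K = openArc (g u) (g w)

def InLimitSet (d : ℕ) (T : Set S1) (a b : S1) : Prop :=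
  ∃ φ : ℕ → ℕ, StrictMono φ ∧ ∃ u v : ℕ → S1,
    (∀ n, u n ∈ (fd d)^[φ n] '' T ∧ v n ∈ (fd d)^[φ n] '' T) ∧
    Tendsto (fun n => hausdorffDist (chord (u n) (v n)) (chord a b)) atTop (nhds 0)


section Stmt4Aux

open Complex Real in
lemma emb_coe (t : ℝ) : emb (t : S1) = Complex.exp ((2 * π * t : ℝ) * Complex.I) := by
  unfold emb
  rw [AddCircle.toCircle_apply_mk, Circle.coe_exp]
  norm_num

open Real in
lemma emb_re (t : ℝ) : (emb (t : S1)).re = Real.cos (2 * π * t) := by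
  rw [emb_coe, Complex.exp_ofReal_mul_I_re]

open Real in
lemma emb_im (t : ℝ) : (emb (t : S1)).im = Real.sin (2 * π * t) := by
  rw [emb_coe, Complex.exp_ofReal_mul_I_im]

lemma continuous_emb : Continuous emb :=
  continuous_subtype_val.comp AddCircle.continuous_toCircle

lemma abs_emb (x : S1) : ‖emb x‖ = 1 := Circle.norm_coe _

lemma exists_repr (x : S1) : ∃ t : ℝ, 0 ≤ t ∧ t < 1 ∧ (t : S1) = x := by
  obtain ⟨h0, h1⟩ := (AddCircle.equivIco 1 0 x).2
  refine ⟨(AddCircle.equivIco 1 0 x : ℝ), h0, by simpa using h1, ?_⟩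
  exact (AddCircle.equivIco 1 0).symm_apply_apply x

instance : LocallyConnectedSpace S1 := by
  rw [locallyConnectedSpace_iff_connected_subsets]
  intro x U hU
  obtain ⟨t, rfl⟩ := QuotientAddGroup.mk_surjective x
  have hcont : Continuous ((↑) : ℝ → S1) := AddCircle.continuous_mk' 1
  have hpre : ((↑) : ℝ → S1) ⁻¹' U ∈ nhds t := hcont.continuousAt.preimage_mem_nhds hU
  obtain ⟨ε, hε, hball⟩ := Metric.mem_nhds_iff.mp hpre
  refine ⟨((↑) : ℝ → S1) '' Metric.ball t ε, ?_, ?_, ?_⟩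
  · exact (QuotientAddGroup.isOpenMap_coe (G := ℝ)).image_mem_nhds (Metric.ball_mem_nhds t hε)
  · rw [Real.ball_eq_Ioo]
    exact isPreconnected_Ioo.image _ hcont.continuousOn
  · exact (Set.image_subset_iff).mpr hball

lemma mem_cci_of_mem_closure {α : Type*} [TopologicalSpace α] [LocallyConnectedSpace α]
    {U : Set α} (hU : IsOpen U) {x y : α}
    (hy : y ∈ closure (connectedComponentIn U x)) (hyU : y ∈ U) :
    y ∈ connectedComponentIn U x := by
  have h1 : IsOpen (connectedComponentIn U y) := hU.connectedComponentIn
  have h2 : connectedComponentIn U y ∈ nhds y := h1.mem_nhds (mem_connectedComponentIn hyU)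
  obtain ⟨z, hz1, hz2⟩ := mem_closure_iff_nhds.mp hy _ h2
  have heq : connectedComponentIn U x = connectedComponentIn U y :=
    (connectedComponentIn_eq hz2).trans (connectedComponentIn_eq hz1).symm
  rw [heq]
  exact mem_connectedComponentIn hyU

lemma triple_mem_hull {K : Set ℂ} {a b c : ℂ} (ha : a ∈ K) (hb : b ∈ K) (hc : c ∈ K)
    {w : Fin 3 → ℝ} (hw : w ∈ stdSimplex ℝ (Fin 3)) :
    w 0 • a + w 1 • b + w 2 • c ∈ convexHull ℝ K := by
  have := Finset.centerMass_mem_convexHull (Finset.univ : Finset (Fin 3))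
    (w := w) (z := ![a, b, c]) (fun i _ => hw.1 i)
    (by rw [hw.2]; norm_num) (fun i _ => by fin_cases i <;> simpa)
  have hsum : w 0 + w 1 + w 2 = 1 := by
    have h2 := hw.2; rwa [Fin.sum_univ_three] at h2
  rw [Finset.centerMass, Fin.sum_univ_three, hsum] at this
  simpa [Fin.sum_univ_three] using this

lemma isCompact_convexHull' {K : Set ℂ} (hK : IsCompact K) : IsCompact (convexHull ℝ K) := by
  rcases K.eq_empty_or_nonempty with rfl | hne
  · simp
  set g : (ℂ × ℂ × ℂ) × (Fin 3 → ℝ) → ℂ :=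
    fun p => p.2 0 • p.1.1 + p.2 1 • p.1.2.1 + p.2 2 • p.1.2.2 with hgdef
  have hg : Continuous g := by fun_prop
  have hcomp : IsCompact (((K ×ˢ (K ×ˢ K)) ×ˢ stdSimplex ℝ (Fin 3))) :=
    (hK.prod (hK.prod hK)).prod (isCompact_stdSimplex _ _)
  have heq : convexHull ℝ K = g '' ((K ×ˢ (K ×ˢ K)) ×ˢ stdSimplex ℝ (Fin 3)) := by
    apply Subset.antisymm
    · intro x hx
      rw [convexHull_eq_union] at hx
      simp only [Set.mem_iUnion] at hx
      obtain ⟨t, hts, hai, hxt⟩ := hx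
      have hcard : t.card ≤ 3 := by
        have h1 := hai.card_le_finrank_succ
        rw [Fintype.card_coe] at h1
        have h2 : Module.finrank ℝ (vectorSpan ℝ (Set.range ((↑) : ↥t → ℂ))) ≤ 2 := by
          have := Submodule.finrank_le (vectorSpan ℝ (Set.range ((↑) : ↥t → ℂ)))
          rwa [Complex.finrank_real_complex] at this
        omega
      have htne : t.Nonempty := by
        by_contra h
        rw [Finset.not_nonempty_iff_eq_empty] at h
        subst h
        simp at hxt
      have hpos : 1 ≤ t.card := htne.card_pos
      interval_cases hc : t.card
      · obtain ⟨a, rfl⟩ := Finset.card_eq_one.mp hc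
        simp only [Finset.coe_singleton, convexHull_singleton, Set.mem_singleton_iff] at hxt
        subst hxt
        refine ⟨((x, x, x), ![1, 0, 0]), ?_, ?_⟩
        · refine ⟨⟨?_, ?_, ?_⟩, ⟨fun i => by fin_cases i <;> norm_num, by simp [Fin.sum_univ_three]⟩⟩ <;>
            exact hts (by simp)
        · simp [hgdef]
      · obtain ⟨a, b, hab, rfl⟩ := Finset.card_eq_two.mp hc
        rw [Finset.coe_insert, Finset.coe_singleton, convexHull_pair] at hxt
        obtain ⟨u, v, hu, hv, huv, rfl⟩ := hxt
        refine ⟨((a, b, b), ![u, v, 0]), ?_, ?_⟩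
        · refine ⟨⟨hts (by simp), hts (by simp), hts (by simp)⟩,
            ⟨fun i => by fin_cases i <;> simp [hu, hv], by simp [Fin.sum_univ_three, huv]⟩⟩
        · simp [hgdef]
      · obtain ⟨a, b, c, hab, hac, hbc, rfl⟩ := Finset.card_eq_three.mp hc
        have hcoe : ((insert a (insert b {c}) : Finset ℂ) : Set ℂ) = insert a ({b, c} : Set ℂ) := by
          simp
        rw [hcoe, convexHull_insert ⟨b, by simp⟩, convexJoin] at hxt
        simp only [Set.mem_iUnion, Set.mem_singleton_iff] at hxt
        obtain ⟨a0, ha0, y, hy, hxy⟩ := hxt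
        rw [ha0] at hxy
        rw [convexHull_pair] at hy
        obtain ⟨p, q, hp, hq, hpq, rfl⟩ := hy
        obtain ⟨u, v, hu, hv, huv, rfl⟩ := hxy
        refine ⟨((a, b, c), ![u, v * p, v * q]), ?_, ?_⟩
        · refine ⟨⟨hts (by simp), hts (by simp), hts (by simp)⟩,
            ⟨fun i => by fin_cases i <;> simp <;> positivity,
             by rw [Fin.sum_univ_three]; simp; nlinarith⟩⟩
        · simp only [hgdef, Matrix.cons_val_zero, Matrix.cons_val_one, Matrix.head_cons,
            Matrix.cons_val_two, Matrix.tail_cons, smul_add, smul_smul]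
          module
    · rintro _ ⟨⟨⟨a, b, c⟩, w⟩, ⟨⟨ha, hb, hc⟩, hw⟩, rfl⟩
      exact triple_mem_hull ha hb hc hw
  rw [heq]
  exact hcomp.image hg

open Real in
lemma cos_iff {c : ℝ} (hc1 : -1 < c) (hc2 : c ≤ 1) {t : ℝ} (ht0 : 0 ≤ t) (ht1 : t < 1) :
    Real.cos (2 * π * t) < c ↔ (arccos c / (2 * π) < t ∧ t < 1 - arccos c / (2 * π)) := by
  have hπ : (0:ℝ) < π := pi_pos
  set A := arccos c with hA
  have hA0 : 0 ≤ A := arccos_nonneg c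
  have hAπ : A < π := lt_of_le_of_ne (arccos_le_pi c) (fun h => by
    have := (arccos_eq_pi).mp h; linarith)
  have hcosA : Real.cos A = c := cos_arccos (le_of_lt hc1) hc2
  have h2π : (0:ℝ) < 2 * π := by linarith
  have ht₀ : A / (2 * π) < 1 / 2 := by
    rw [div_lt_div_iff₀ h2π (by norm_num)]
    linarith
  rcases le_or_gt t (1/2) with hhalf | hhalf
  · have hmem : 2 * π * t ∈ Set.Icc 0 π := ⟨by positivity, by nlinarith⟩
    constructor
    · intro h
      constructor
      · by_contra hcon
        push_neg at hcon
        have hle : 2 * π * t ≤ A := by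
          have := (le_div_iff₀ h2π).mp hcon; linarith
        have hge := Real.cos_le_cos_of_nonneg_of_le_pi (by positivity : (0:ℝ) ≤ 2 * π * t)
          (le_of_lt hAπ) hle
        linarith
      · linarith
    · rintro ⟨h1, _⟩
      have hlt : A < 2 * π * t := by
        rw [div_lt_iff₀ h2π] at h1
        linarith
      calc Real.cos (2 * π * t) < Real.cos A :=
            Real.strictAntiOn_cos ⟨hA0, arccos_le_pi c⟩ hmem hlt
        _ = c := hcosA
  · have hs0 : 0 < 1 - t := by linarith
    have hs2 : 1 - t < 1/2 := by linarith
    have hrw : Real.cos (2 * π * t) = Real.cos (2 * π * (1 - t)) := by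
      have : 2 * π * t = 2 * π - 2 * π * (1 - t) := by ring
      rw [this, Real.cos_two_pi_sub]
    have hmem : 2 * π * (1 - t) ∈ Set.Icc 0 π := ⟨by positivity, by nlinarith⟩
    rw [hrw]
    constructor
    · intro h
      constructor
      · have : A / (2 * π) < 1/2 := ht₀
        linarith
      · by_contra hcon
        push_neg at hcon
        have hle : 2 * π * (1 - t) ≤ A := by
          have h' : 1 - t ≤ A / (2 * π) := by linarith
          have := (le_div_iff₀ h2π).mp h'; linarith
        have hge := Real.cos_le_cos_of_nonneg_of_le_pi
          (by positivity : (0:ℝ) ≤ 2 * π * (1 - t)) (le_of_lt hAπ) hle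
        linarith
    · rintro ⟨_, h2⟩
      have hlt : A < 2 * π * (1 - t) := by
        rw [div_lt_iff₀ h2π] at ht₀
        have : t < 1 - A / (2*π) := h2
        rw [lt_sub_iff_add_lt] at this
        have := (div_lt_iff₀ h2π).mp (by linarith : A / (2*π) < 1 - t)
        linarith
      calc Real.cos (2 * π * (1 - t)) < Real.cos A :=
            Real.strictAntiOn_cos ⟨hA0, arccos_le_pi c⟩ hmem hlt
        _ = c := hcosA

open Real in
lemma cos_sublevel_preconnected (c : ℝ) : IsPreconnected {x : S1 | (emb x).re < c} := by
  have hre : ∀ x : S1, -1 ≤ (emb x).re ∧ (emb x).re ≤ 1 := fun x => by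
    have h := Complex.abs_re_le_norm (emb x)
    rw [abs_emb] at h
    exact abs_le.mp h
  rcases le_or_gt c (-1) with h1 | h1
  · convert isPreconnected_empty
    ext x
    simp only [mem_setOf_eq, mem_empty_iff_false, iff_false, not_lt]
    linarith [(hre x).1]
  rcases lt_or_ge 1 c with h2 | h2
  · haveI : PathConnectedSpace S1 := AddCircle.pathConnectedSpace 1
    haveI : PreconnectedSpace S1 := inferInstance
    have huniv : {x : S1 | (emb x).re < c} = univ := by
      ext x
      simp only [mem_setOf_eq, mem_univ, iff_true]
      linarith [(hre x).2]
    rw [huniv]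
    exact isPreconnected_univ
  · have hset : {x : S1 | (emb x).re < c} =
        (fun t : ℝ => (t : S1)) '' Set.Ioo (arccos c / (2*π)) (1 - arccos c / (2*π)) := by
      have ht₀ : 0 ≤ arccos c / (2*π) := div_nonneg (arccos_nonneg c) (by positivity)
      ext x
      constructor
      · intro hx
        obtain ⟨t, ht0, ht1, rfl⟩ := exists_repr x
        rw [mem_setOf_eq, emb_re] at hx
        exact ⟨t, (cos_iff h1 h2 ht0 ht1).mp hx, rfl⟩
      · rintro ⟨t, ht, rfl⟩
        have ht0 : 0 ≤ t := le_of_lt (lt_of_le_of_lt ht₀ ht.1)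
        have ht1 : t < 1 := by have := ht.2; linarith
        rw [mem_setOf_eq, emb_re]
        exact (cos_iff h1 h2 ht0 ht1).mpr ⟨ht.1, ht.2⟩
    rw [hset]
    exact isPreconnected_Ioo.image _ (AddCircle.continuous_mk' 1).continuousOn

open Real in
lemma sublevel_preconnected (f : ℂ →L[ℝ] ℝ) (u : ℝ) :
    IsPreconnected {x : S1 | f (emb x) < u} := by
  set a := f 1 with ha
  set b := f Complex.I with hb
  have hkey : ∀ x : S1, f (emb x) = a * (emb x).re + b * (emb x).im := by
    intro x
    calc f (emb x) = f ((emb x).re • (1:ℂ) + (emb x).im • Complex.I) := by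
          congr 1
          simp [Complex.real_smul, Complex.re_add_im]
      _ = a * (emb x).re + b * (emb x).im := by
          rw [map_add, _root_.map_smul, _root_.map_smul, smul_eq_mul, smul_eq_mul, ← ha, ← hb]; ring
  by_cases hab : a = 0 ∧ b = 0
  · have h0 : ∀ x : S1, f (emb x) = 0 := fun x => by rw [hkey x, hab.1, hab.2]; ring
    rcases lt_or_ge 0 u with hu | hu
    · have : {x : S1 | f (emb x) < u} = univ := by
        ext x; simp [h0 x, hu]
      rw [this]
      haveI : PathConnectedSpace S1 := AddCircle.pathConnectedSpace 1
      exact isPreconnected_univ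
    · have : {x : S1 | f (emb x) < u} = ∅ := by
        ext x; simp [h0 x]; linarith
      rw [this]; exact isPreconnected_empty
  · set z₀ : ℂ := (a : ℂ) + (b : ℂ) * Complex.I with hz₀
    have hrea : z₀.re = a := by simp [hz₀]
    have himb : z₀.im = b := by simp [hz₀]
    have hz0 : z₀ ≠ 0 := by
      intro h
      exact hab ⟨by rw [← hrea, h]; simp, by rw [← himb, h]; simp⟩
    set r := ‖z₀‖ with hr
    have hrpos : 0 < r := by
      rw [hr]; exact (norm_pos_iff.mpr hz0)
    set θ := Complex.arg z₀ with hθ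
    have ha' : a = r * Real.cos θ := by
      rw [hθ, Complex.cos_arg hz0, hrea, ← hr]; field_simp
    have hb' : b = r * Real.sin θ := by
      rw [hθ, Complex.sin_arg, himb, ← hr]; field_simp
    set cpt : S1 := ((θ / (2*π) : ℝ) : S1) with hcpt
    have hembre : (emb cpt).re = Real.cos θ := by
      rw [hcpt, emb_re]
      congr 1
      field_simp
    have hembim : (emb cpt).im = Real.sin θ := by
      rw [hcpt, emb_im]
      congr 1
      field_simp
    have hmul : ∀ x : S1, f (emb x) = r * (emb (x - cpt)).re := by
      intro x
      have hxc : x - cpt + cpt = x := by abel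
      have hxe : emb x = emb (x - cpt) * emb cpt := by
        conv_lhs => rw [← hxc]
        unfold emb
        rw [← Circle.coe_mul, ← AddCircle.toCircle_add]
      rw [hkey, hxe, Complex.mul_re, Complex.mul_im, hembre, hembim, ha', hb']
      have hpy := Real.sin_sq_add_cos_sq θ
      linear_combination (r * (emb (x - cpt)).re) * hpy
    have hset : {x : S1 | f (emb x) < u} = (fun y => y + cpt) '' {y : S1 | (emb y).re < u / r} := by
      ext x
      simp only [mem_setOf_eq, Set.mem_image]
      constructor
      · intro hx
        refine ⟨x - cpt, ?_, by abel⟩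
        have hx' := hx
        rw [hmul x] at hx'
        exact (lt_div_iff₀ hrpos).mpr (by linarith)
      · rintro ⟨y, hy, rfl⟩
        have hy' := (lt_div_iff₀ hrpos).mp hy
        rw [hmul, add_sub_cancel_right]
        linarith
    rw [hset]
    exact (cos_sublevel_preconnected (u / r)).image _ (continuous_id.add continuous_const).continuousOn

lemma subset_hole {Q B : Set S1} (hQcl : IsClosed Q) (hBcl : IsClosed B) (hQne : Q.Nonempty)
    (hunl : Disjoint (CH Q) (CH B)) :
    ∃ q₀ ∈ Bᶜ, Q ⊆ connectedComponentIn Bᶜ q₀ := by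
  have hQc : IsCompact (CH Q) := isCompact_convexHull' (hQcl.isCompact.image continuous_emb)
  have hBc : IsCompact (CH B) := isCompact_convexHull' (hBcl.isCompact.image continuous_emb)
  obtain ⟨f, u, v, hfu, huv, hfv⟩ := geometric_hahn_banach_compact_closed
    (convex_convexHull ℝ _) hQc (convex_convexHull ℝ _) hBc.isClosed hunl
  set S := {x : S1 | f (emb x) < u} with hS
  have hQS : Q ⊆ S := fun q hq => hfu _ (subset_convexHull ℝ _ (mem_image_of_mem _ hq))
  have hSB : S ⊆ Bᶜ := by
    intro x hx hxB
    have h1 : f (emb x) < u := hx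
    have h2 : v < f (emb x) := hfv _ (subset_convexHull ℝ _ (mem_image_of_mem _ hxB))
    linarith
  obtain ⟨q₀, hq₀⟩ := hQne
  exact ⟨q₀, hSB (hQS hq₀),
    hQS.trans ((sublevel_preconnected f u).subset_connectedComponentIn (hQS hq₀) hSB)⟩

end Stmt4Aux

/-- an unlinked set is contained in a long hole. -/
theorem stmt4 (Q B : Set S1) (hQcl : IsClosed Q) (hBcl : IsClosed B)
    (hB3 : ∃ a b c : S1, a ∈ B ∧ b ∈ B ∧ c ∈ B ∧ a ≠ b ∧ a ≠ c ∧ b ≠ c)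
    (hQ3 : ∃ a b c : S1, a ∈ Q ∧ b ∈ Q ∧ c ∈ Q ∧ a ≠ b ∧ a ≠ c ∧ b ≠ c)
    (hunl : Disjoint (CH Q) (CH B)) (τ : ℝ) (hτ : 0 < τ)
    (hBh : ∃ H1 H2 : Set S1, IsHole B H1 ∧ IsHole B H2 ∧ H1 ≠ H2 ∧
      τ ≤ len H1 ∧ τ ≤ len H2)
    (hQh : ∃ H1 H2 : Set S1, IsHole Q H1 ∧ IsHole Q H2 ∧ H1 ≠ H2 ∧
      τ ≤ len H1 ∧ τ ≤ len H2) :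
    ∃ H : Set S1, IsHole B H ∧ Q ⊆ H ∧ τ < len H := by
  obtain ⟨qa, qb, qc, hqa, hqb, hqc, _, _, _⟩ := hQ3
  obtain ⟨ba, bb, bc, hba, hbb, hbc, _, _, _⟩ := hB3
  have hQne : Q.Nonempty := ⟨qa, hqa⟩
  have hBne : B.Nonempty := ⟨ba, hba⟩
  haveI : PathConnectedSpace S1 := AddCircle.pathConnectedSpace 1
  obtain ⟨q₀, hq₀, hQH⟩ := subset_hole hQcl hBcl hQne hunl
  obtain ⟨b₀, hb₀, hBG⟩ := subset_hole hBcl hQcl hBne hunl.symm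
  set H := connectedComponentIn Bᶜ q₀ with hH
  set G0 := connectedComponentIn Qᶜ b₀ with hG0
  have hHopen : IsOpen H := hBcl.isOpen_compl.connectedComponentIn
  have hHBc : H ⊆ Bᶜ := connectedComponentIn_subset _ _
  have hQB : Q ⊆ Bᶜ := hQH.trans hHBc
  have key : ∀ G, IsHole Q G → G ≠ G0 → closure G ⊆ H := by
    rintro G ⟨x, hx, rfl⟩ hne
    have hGQ : connectedComponentIn Qᶜ x ⊆ Qᶜ := connectedComponentIn_subset _ _
    have hGB : ∀ z ∈ B, z ∉ connectedComponentIn Qᶜ x := by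
      intro z hzB hzG
      apply hne
      rw [hG0]
      exact (connectedComponentIn_eq hzG).trans (connectedComponentIn_eq (hBG hzB)).symm
    have hclQ : closure (connectedComponentIn Qᶜ x) ⊆ connectedComponentIn Qᶜ x ∪ Q := by
      intro z hz
      by_cases hzQ : z ∈ Q
      · exact Or.inr hzQ
      · exact Or.inl (mem_cci_of_mem_closure hQcl.isOpen_compl hz hzQ)
    have hclB : closure (connectedComponentIn Qᶜ x) ⊆ Bᶜ := by
      intro z hz
      rcases hclQ hz with h | h
      · exact fun hzB => hGB z hzB h
      · exact hQB h
    have hyQ : ∃ y ∈ closure (connectedComponentIn Qᶜ x), y ∈ Q := by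
      by_contra hcon
      push_neg at hcon
      have hcl : closure (connectedComponentIn Qᶜ x) ⊆ connectedComponentIn Qᶜ x :=
        fun z hz => (hclQ hz).resolve_right (hcon z hz)
      have hclopen : IsClopen (connectedComponentIn Qᶜ x) :=
        ⟨isClosed_of_closure_subset hcl, hQcl.isOpen_compl.connectedComponentIn⟩
      have huniv := hclopen.eq_univ ⟨x, mem_connectedComponentIn hx⟩
      exact (hGQ (huniv ▸ mem_univ qa)) hqa
    obtain ⟨y, hyc, hyQmem⟩ := hyQ
    have hyH : y ∈ H := hQH hyQmem
    have hsub : closure (connectedComponentIn Qᶜ x) ⊆ connectedComponentIn Bᶜ y :=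
      (isPreconnected_connectedComponentIn.closure).subset_connectedComponentIn hyc hclB
    rw [hH, connectedComponentIn_eq hyH]
    exact hsub
  obtain ⟨G1, G2, hG1, hG2, hG12, hτ1, hτ2⟩ := hQh
  have hfin : ∀ A : Set S1, volume A ≠ ⊤ := fun A => measure_ne_top _ _
  have hopen_hole : ∀ G, IsHole Q G → IsOpen G := by
    rintro G ⟨x, hx, rfl⟩
    exact hQcl.isOpen_compl.connectedComponentIn
  refine ⟨H, ⟨q₀, hq₀, hH⟩, hQH, ?_⟩
  by_cases hc : G1 ≠ G0 ∧ G2 ≠ G0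
  · have h1 := key G1 hG1 hc.1
    have h2 := key G2 hG2 hc.2
    have hdisj : Disjoint G1 G2 := by
      rw [Set.disjoint_left]
      intro z hz1 hz2
      obtain ⟨x1, hx1, hGe1⟩ := hG1
      obtain ⟨x2, hx2, hGe2⟩ := hG2
      apply hG12
      rw [hGe1, hGe2]
      rw [hGe1] at hz1; rw [hGe2] at hz2
      exact (connectedComponentIn_eq hz1).trans (connectedComponentIn_eq hz2).symm
    have hsub : G1 ∪ G2 ⊆ H :=
      union_subset (subset_closure.trans h1) (subset_closure.trans h2)
    have hm : volume G1 + volume G2 = volume (G1 ∪ G2) :=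
      (measure_union hdisj (hopen_hole G2 hG2).measurableSet).symm
    have hle : volume (G1 ∪ G2) ≤ volume H := measure_mono hsub
    have hlen : len G1 + len G2 ≤ len H := by
      unfold len
      rw [← ENNReal.toReal_add (hfin G1) (hfin G2), hm]
      exact ENNReal.toReal_mono (hfin H) hle
    linarith
  · obtain ⟨G, hG, hτG, hGne⟩ : ∃ G, IsHole Q G ∧ τ ≤ len G ∧ G ≠ G0 := by
      by_cases h1 : G1 = G0
      · exact ⟨G2, hG2, hτ2, fun h => hG12 (h1.trans h.symm)⟩
      · exact ⟨G1, hG1, hτ1, h1⟩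
    have hcl := key G hG hGne
    have hGH : G ⊆ H := subset_closure.trans hcl
    set V := H \ closure G with hV
    have hVopen : IsOpen V := hHopen.sdiff isClosed_closure
    have hVne : V.Nonempty := by
      by_contra hcon
      rw [Set.not_nonempty_iff_eq_empty, diff_eq_empty] at hcon
      have hHeq : IsClosed H := by
        rw [hcon.antisymm hcl]
        exact isClosed_closure
      have hclopen : IsClopen H := ⟨hHeq, hHopen⟩
      have huniv := hclopen.eq_univ ⟨q₀, mem_connectedComponentIn hq₀⟩
      exact (hHBc (huniv ▸ mem_univ ba)) hba
    have hdisj : Disjoint G V := disjoint_left.mpr fun z hzG hzV => hzV.2 (subset_closure hzG)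
    have hsub : G ∪ V ⊆ H := union_subset hGH diff_subset
    have hm : volume G + volume V = volume (G ∪ V) :=
      (measure_union hdisj hVopen.measurableSet).symm
    have hle : volume (G ∪ V) ≤ volume H := measure_mono hsub
    have hVpos : 0 < len V :=
      ENNReal.toReal_pos (hVopen.measure_pos volume hVne).ne' (hfin V)
    have hlen : len G + len V ≤ len H := by
      unfold len
      rw [← ENNReal.toReal_add (hfin G) (hfin V), hm]
      exact ENNReal.toReal_mono (hfin H) hle
    unfold len at *
    linarith
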